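/- Let U ⊂ ℂ be open and let γ = (γ₁, γ₂) : U → ℂ² be holomorphic (ℂ-differentiable on U). Regard x(u,v) = (Re γ₁(u+iv), Re γ₂(u+iv)) and y(u,v) = (Im γ₁(u+iv), Im γ₂(u+iv)) as maps into ℝ². Then at every point of U (in real coordinates z = u + iv): ∂/∂v [ω(∂x/∂u, y)] = ∂/∂u [ω(∂x/∂v, y)]; that is, the 1-form ω(x_u, y) du + ω(x_v, y) dv is closed, which is the condition for the local existence of a function f with f_u = ω(x_u, y) and f_v = ω(x_v, y). -/

import Mathlib

noncomputable def eL : ℝ × ℝ →L[ℝ] ℂ := Complex.equivRealProdCLM.symm.toContinuousLinearMap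

lemma eL_apply (p : ℝ × ℝ) : eL p = p.1 + p.2 * Complex.I := by
  show Complex.equivRealProdCLM.symm p = _
  rw [ContinuousLinearEquiv.symm_apply_eq]
  exact ((Prod.mk.injEq _ _ _ _).mpr ⟨by simp, by simp⟩ :
    ((p.1:ℂ)+p.2*Complex.I).equivRealProd = p).symm

lemma hasFDerivAt_comp (g : ℂ → ℂ) (p : ℝ × ℝ)
    (hg : DifferentiableAt ℂ g (p.1 + p.2 * Complex.I)) :
    HasFDerivAt (fun q : ℝ × ℝ => g (q.1 + q.2 * Complex.I))
      (((fderiv ℂ g (p.1 + p.2 * Complex.I)).restrictScalars ℝ).comp eL) p := by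
  rw [show (p.1:ℂ) + p.2 * Complex.I = eL p from (eL_apply p).symm] at hg ⊢
  have h1 : HasFDerivAt (g ∘ eL)
      (((fderiv ℂ g (eL p)).restrictScalars ℝ).comp eL) p :=
    (hg.hasFDerivAt.restrictScalars ℝ).comp p (eL.hasFDerivAt)
  have hfun : (fun q : ℝ×ℝ => g (q.1+q.2*Complex.I)) = g ∘ eL :=
    funext fun q => by rw [Function.comp_apply, eL_apply]
  rw [hfun]; exact h1

lemma fderiv_apply_mul (g : ℂ → ℂ) (z w : ℂ) : fderiv ℂ g z w = w * deriv g z := by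
  conv_lhs => rw [show w = w • (1:ℂ) by simp]
  rw [map_smul]; rfl

lemma hasRe (g : ℂ → ℂ) (p : ℝ × ℝ)
    (hg : DifferentiableAt ℂ g (p.1 + p.2 * Complex.I)) :
    HasFDerivAt (fun q : ℝ × ℝ => (g (q.1 + q.2 * Complex.I)).re)
      (Complex.reCLM.comp (((fderiv ℂ g (p.1 + p.2 * Complex.I)).restrictScalars ℝ).comp eL)) p :=
  (Complex.reCLM.hasFDerivAt).comp p (hasFDerivAt_comp g p hg)

lemma hasIm (g : ℂ → ℂ) (p : ℝ × ℝ)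
    (hg : DifferentiableAt ℂ g (p.1 + p.2 * Complex.I)) :
    HasFDerivAt (fun q : ℝ × ℝ => (g (q.1 + q.2 * Complex.I)).im)
      (Complex.imCLM.comp (((fderiv ℂ g (p.1 + p.2 * Complex.I)).restrictScalars ℝ).comp eL)) p :=
  (Complex.imCLM.hasFDerivAt).comp p (hasFDerivAt_comp g p hg)

lemma re_val (g : ℂ → ℂ) (z : ℂ) (w : ℝ × ℝ) :
    (Complex.reCLM.comp (((fderiv ℂ g z).restrictScalars ℝ).comp eL)) w
      = ((w.1 + w.2 * Complex.I) * deriv g z).re := by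
  simp [ContinuousLinearMap.comp_apply, eL_apply, fderiv_apply_mul]

lemma im_val (g : ℂ → ℂ) (z : ℂ) (w : ℝ × ℝ) :
    (Complex.imCLM.comp (((fderiv ℂ g z).restrictScalars ℝ).comp eL)) w
      = ((w.1 + w.2 * Complex.I) * deriv g z).im := by
  simp [ContinuousLinearMap.comp_apply, eL_apply, fderiv_apply_mul]

/-- The canonical symplectic form on `ℝ²`: `ω((a₁,a₂),(c₁,c₂)) = a₁c₂ − a₂c₁`. -/
def omega2 (a c : ℝ × ℝ) : ℝ := a.1 * c.2 - a.2 * c.1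

theorem stmt3 (U : Set ℂ) (hU : IsOpen U) (γ₁ γ₂ : ℂ → ℂ)
    (hγ₁ : ∀ z ∈ U, DifferentiableAt ℂ γ₁ z)
    (hγ₂ : ∀ z ∈ U, DifferentiableAt ℂ γ₂ z)
    (x y : ℝ × ℝ → ℝ × ℝ)
    (hx : ∀ p : ℝ × ℝ,
      x p = ((γ₁ (p.1 + p.2 * Complex.I)).re, (γ₂ (p.1 + p.2 * Complex.I)).re))
    (hy : ∀ p : ℝ × ℝ,
      y p = ((γ₁ (p.1 + p.2 * Complex.I)).im, (γ₂ (p.1 + p.2 * Complex.I)).im)) :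
    ∀ u v : ℝ, (u + v * Complex.I) ∈ U →
      fderiv ℝ (fun p : ℝ × ℝ => omega2 (fderiv ℝ x p (1, 0)) (y p)) (u, v) (0, 1) =
      fderiv ℝ (fun p : ℝ × ℝ => omega2 (fderiv ℝ x p (0, 1)) (y p)) (u, v) (1, 0) := by
  have hx' : x = fun p : ℝ × ℝ =>
      (((γ₁ (p.1 + p.2 * Complex.I)).re : ℝ), ((γ₂ (p.1 + p.2 * Complex.I)).re : ℝ)) := funext hx
  have hy' : y = fun p : ℝ × ℝ =>
      (((γ₁ (p.1 + p.2 * Complex.I)).im : ℝ), ((γ₂ (p.1 + p.2 * Complex.I)).im : ℝ)) := funext hy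
  subst hx' hy'
  -- analyticity: derivatives are differentiable on U
  have hγ₁' : ∀ z ∈ U, DifferentiableAt ℂ (deriv γ₁) z := by
    have hdo : DifferentiableOn ℂ γ₁ U := fun w hw => (hγ₁ w hw).differentiableWithinAt
    have han : AnalyticOnNhd ℂ γ₁ U := fun w hw => hdo.analyticAt (hU.mem_nhds hw)
    exact fun z hz => (han.deriv z hz).differentiableAt
  have hγ₂' : ∀ z ∈ U, DifferentiableAt ℂ (deriv γ₂) z := by
    have hdo : DifferentiableOn ℂ γ₂ U := fun w hw => (hγ₂ w hw).differentiableWithinAt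
    have han : AnalyticOnNhd ℂ γ₂ U := fun w hw => hdo.analyticAt (hU.mem_nhds hw)
    exact fun z hz => (han.deriv z hz).differentiableAt
  intro u v hmem
  set p₀ : ℝ × ℝ := (u, v) with hp₀def
  have hp₀U : ((p₀.1:ℂ) + p₀.2 * Complex.I) ∈ U := hmem
  -- the open set V in the plane
  have hVopen : IsOpen {q : ℝ × ℝ | ((q.1:ℂ) + q.2 * Complex.I) ∈ U} := by
    have : Continuous fun q : ℝ × ℝ => ((q.1:ℂ) + q.2 * Complex.I) := by continuity
    exact hU.preimage this
  have hVnhds : {q : ℝ × ℝ | ((q.1:ℂ) + q.2 * Complex.I) ∈ U} ∈ nhds p₀ :=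
    hVopen.mem_nhds hp₀U
  -- LHS rewrite
  have hevL : (fun q : ℝ × ℝ => omega2
        (fderiv ℝ (fun p : ℝ × ℝ =>
          (((γ₁ (p.1 + p.2 * Complex.I)).re : ℝ), ((γ₂ (p.1 + p.2 * Complex.I)).re : ℝ))) q (1, 0))
        (((γ₁ (q.1 + q.2 * Complex.I)).im : ℝ), ((γ₂ (q.1 + q.2 * Complex.I)).im : ℝ)))
      =ᶠ[nhds p₀] (fun q : ℝ × ℝ =>
        (deriv γ₁ (q.1 + q.2 * Complex.I)).re * (γ₂ (q.1 + q.2 * Complex.I)).im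
        - (deriv γ₂ (q.1 + q.2 * Complex.I)).re * (γ₁ (q.1 + q.2 * Complex.I)).im) := by
    filter_upwards [hVnhds] with q hq
    have h1 := hasRe γ₁ q (hγ₁ _ hq)
    have h2 := hasRe γ₂ q (hγ₂ _ hq)
    have := (HasFDerivAt.prodMk h1 h2).fderiv
    rw [this]
    simp only [ContinuousLinearMap.prod_apply, omega2, re_val]
    norm_num
  have hevR : (fun q : ℝ × ℝ => omega2
        (fderiv ℝ (fun p : ℝ × ℝ =>
          (((γ₁ (p.1 + p.2 * Complex.I)).re : ℝ), ((γ₂ (p.1 + p.2 * Complex.I)).re : ℝ))) q (0, 1))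
        (((γ₁ (q.1 + q.2 * Complex.I)).im : ℝ), ((γ₂ (q.1 + q.2 * Complex.I)).im : ℝ)))
      =ᶠ[nhds p₀] (fun q : ℝ × ℝ =>
        -((deriv γ₁ (q.1 + q.2 * Complex.I)).im * (γ₂ (q.1 + q.2 * Complex.I)).im)
        + (deriv γ₂ (q.1 + q.2 * Complex.I)).im * (γ₁ (q.1 + q.2 * Complex.I)).im) := by
    filter_upwards [hVnhds] with q hq
    have h1 := hasRe γ₁ q (hγ₁ _ hq)
    have h2 := hasRe γ₂ q (hγ₂ _ hq)
    have := (HasFDerivAt.prodMk h1 h2).fderiv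
    rw [this]
    simp only [ContinuousLinearMap.prod_apply, omega2, re_val]
    simp [Complex.mul_re]
  rw [hevL.fderiv_eq, hevR.fderiv_eq]
  -- Now compute both fderivs.
  have hA1 := hasRe (deriv γ₁) p₀ (hγ₁' _ hp₀U)
  have hA2 := hasRe (deriv γ₂) p₀ (hγ₂' _ hp₀U)
  have hB1 := hasIm γ₁ p₀ (hγ₁ _ hp₀U)
  have hB2 := hasIm γ₂ p₀ (hγ₂ _ hp₀U)
  have hC1 := hasIm (deriv γ₁) p₀ (hγ₁' _ hp₀U)
  have hC2 := hasIm (deriv γ₂) p₀ (hγ₂' _ hp₀U)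
  have hFL := ((hA1.mul hB2).sub (hA2.mul hB1)).fderiv
  have hFR := (((hC1.mul hB2).neg).add (hC2.mul hB1)).fderiv
  simp only [Pi.mul_def, Pi.sub_def, Pi.add_def, Pi.neg_def] at hFL hFR
  rw [hFL, hFR]
  simp only [ContinuousLinearMap.sub_apply, ContinuousLinearMap.add_apply,
    ContinuousLinearMap.smul_apply, ContinuousLinearMap.neg_apply, re_val, im_val,
    smul_eq_mul]
  simp [Complex.mul_re, Complex.mul_im]
  ring
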